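/- Let m ≥ 1 and k₁,…,k_m ≥ 1 be integers, N ≥ k + m with k := k₁+⋯+k_m, and τ₁,…,τ_m > 0. Define φ_i(t) := (1/(k_i+1))·(1 − (τ_i/t)^{k_i+1}) for t > 0, and χ(y¹,…,y^m,z) := (φ₁(|y¹|)y¹, …, φ_m(|y^m|)y^m, z) for y^i ∈ ℝ^{k_i+1}∖{0} and z ∈ ℝ^{N−k−m}. Then the divergence of χ satisfies div χ(y¹,…,y^m,z) = N − k at every such point. -/

import Mathlib

/-- The i-th block `y^i ∈ ℝ^{k_i+1}` of a point of
`ℝ^N = ℝ^{k₁+1} × ⋯ × ℝ^{k_m+1} × ℝ^{N-k-m}`. -/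
def blockOf {m : ℕ} {k : Fin m → ℕ} {d : ℕ}
    (x : EuclideanSpace ℝ ((Σ i : Fin m, Fin (k i + 1)) ⊕ Fin d)) (i : Fin m) :
    EuclideanSpace ℝ (Fin (k i + 1)) :=
  WithLp.toLp 2 (fun a => x (Sum.inl ⟨i, a⟩))

/-- The vector field χ(y¹,…,y^m,z) = (φ₁(|y¹|)y¹,…,φ_m(|y^m|)y^m, z), where
φ_i(t) = (1/(k_i+1))(1 − (τ_i/t)^{k_i+1}). -/
noncomputable def chiField {m : ℕ} {k : Fin m → ℕ} {d : ℕ} (τ : Fin m → ℝ)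
    (x : EuclideanSpace ℝ ((Σ i : Fin m, Fin (k i + 1)) ⊕ Fin d)) :
    EuclideanSpace ℝ ((Σ i : Fin m, Fin (k i + 1)) ⊕ Fin d) :=
  WithLp.toLp 2 (fun j => Sum.elim
    (fun p : Σ i : Fin m, Fin (k i + 1) =>
      ((1 / ((k p.1 : ℝ) + 1)) * (1 - (τ p.1 / ‖blockOf x p.1‖) ^ (k p.1 + 1))) * x (Sum.inl p))
    (fun j' => x (Sum.inr j')) j)

section norm_deriv
variable {F : Type*} [NormedAddCommGroup F] [InnerProductSpace ℝ F]

lemma my_hasFDerivAt_norm (x : F) (hx : x ≠ 0) :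
    HasFDerivAt (fun y : F => ‖y‖) (‖x‖⁻¹ • innerSL ℝ x) x := by
  have h2 : HasFDerivAt (fun y : F => ‖y‖ ^ 2) (2 • innerSL ℝ x) x := by
    simpa using (hasFDerivAt_id x).norm_sq
  have hsq : (‖x‖ : ℝ) ^ 2 ≠ 0 := pow_ne_zero 2 (norm_ne_zero_iff.mpr hx)
  have h3 := h2.sqrt hsq
  have he : (fun y : F => Real.sqrt (‖y‖ ^ 2)) = fun y : F => ‖y‖ :=
    funext fun y => Real.sqrt_sq (norm_nonneg y)
  rw [he] at h3
  convert h3 using 1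
  rw [Real.sqrt_sq (norm_nonneg x)]
  ext v
  simp [smul_smul]
  have : ‖x‖ ≠ 0 := norm_ne_zero_iff.mpr hx
  field_simp
end norm_deriv

noncomputable def blockCLM {m : ℕ} {k : Fin m → ℕ} {d : ℕ} (i : Fin m) :
    EuclideanSpace ℝ ((Σ i : Fin m, Fin (k i + 1)) ⊕ Fin d) →L[ℝ]
      EuclideanSpace ℝ (Fin (k i + 1)) :=
  ((PiLp.continuousLinearEquiv 2 ℝ (fun _ : Fin (k i + 1) => ℝ)).symm.toContinuousLinearMap).comp
    (ContinuousLinearMap.pi (fun a => EuclideanSpace.proj (Sum.inl ⟨i, a⟩)))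

lemma blockCLM_single {m : ℕ} {k : Fin m → ℕ} {d : ℕ} (i : Fin m) (a : Fin (k i + 1)) :
    blockCLM (d := d) i
        (EuclideanSpace.single (Sum.inl ⟨i, a⟩ : (Σ i : Fin m, Fin (k i + 1)) ⊕ Fin d) (1:ℝ))
      = EuclideanSpace.single a 1 := by
  show blockOf (EuclideanSpace.single (Sum.inl ⟨i, a⟩) (1:ℝ)) i = EuclideanSpace.single a 1
  ext b
  simp [blockOf, EuclideanSpace.single_apply]

lemma blockOf_single {m : ℕ} {k : Fin m → ℕ} {d : ℕ} (i : Fin m) (a : Fin (k i + 1)) :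
    blockOf (EuclideanSpace.single (Sum.inl ⟨i, a⟩ : (Σ i : Fin m, Fin (k i + 1)) ⊕ Fin d) (1:ℝ)) i
      = EuclideanSpace.single a 1 := by
  ext b
  simp [blockOf, EuclideanSpace.single_apply]

lemma blockOf_apply {m : ℕ} {k : Fin m → ℕ} {d : ℕ}
    (x : EuclideanSpace ℝ ((Σ i : Fin m, Fin (k i + 1)) ⊕ Fin d)) (i : Fin m)
    (a : Fin (k i + 1)) : x (Sum.inl ⟨i, a⟩) = blockOf x i a := rfl

set_option maxHeartbeats 2000000 in

set_option maxHeartbeats 2000000 in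
/-- div χ = N − k at every point where all blocks are nonzero. -/
theorem stmt_9 (m : ℕ) (hm : 1 ≤ m) (k : Fin m → ℕ) (hk : ∀ i, 1 ≤ k i) (N : ℕ)
    (hN : (∑ i, k i) + m ≤ N) (τ : Fin m → ℝ) (hτ : ∀ i, 0 < τ i)
    (x : EuclideanSpace ℝ ((Σ i : Fin m, Fin (k i + 1)) ⊕ Fin (N - (∑ i, k i) - m)))
    (hx : ∀ i, blockOf x i ≠ 0) :
    DifferentiableAt ℝ (chiField (d := N - (∑ i, k i) - m) τ) x ∧
    ∑ j, fderiv ℝ (chiField (d := N - (∑ i, k i) - m) τ) x (EuclideanSpace.single j 1) j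
      = (N : ℝ) - ∑ i, (k i : ℝ) := by
  have hr : ∀ i, (0:ℝ) < ‖blockOf x i‖ := fun i => norm_pos_iff.mpr (hx i)
  have hnorm : ∀ i : Fin m, HasFDerivAt
      (fun z : EuclideanSpace ℝ ((Σ i : Fin m, Fin (k i + 1)) ⊕ Fin (N - (∑ i, k i) - m)) =>
        ‖blockOf z i‖)
      ((‖blockOf x i‖⁻¹ • innerSL ℝ (blockOf x i)).comp (blockCLM i)) x := by
    intro i
    exact (my_hasFDerivAt_norm (blockOf x i) (hx i)).comp x (blockCLM i).hasFDerivAt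
  have hcoef : ∀ i : Fin m, HasFDerivAt
      (fun z : EuclideanSpace ℝ ((Σ i : Fin m, Fin (k i + 1)) ⊕ Fin (N - (∑ i, k i) - m)) =>
        (1 / ((k i : ℝ) + 1)) * (1 - (τ i / ‖blockOf z i‖) ^ (k i + 1)))
      (((1 / ((k i : ℝ) + 1)) *
          (-(((k i + 1 : ℕ) : ℝ) * (τ i / ‖blockOf x i‖) ^ (k i + 1 - 1) *
            ((0 * ‖blockOf x i‖ - τ i * 1) / ‖blockOf x i‖ ^ 2)))) •
        ((‖blockOf x i‖⁻¹ • innerSL ℝ (blockOf x i)).comp (blockCLM i))) x := by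
    intro i
    have h1 : HasDerivAt (fun t : ℝ => τ i / t)
        ((0 * ‖blockOf x i‖ - τ i * 1) / ‖blockOf x i‖ ^ 2) ‖blockOf x i‖ :=
      (hasDerivAt_const _ (τ i)).div (hasDerivAt_id _) (hr i).ne'
    have h4 := ((h1.pow (k i + 1)).const_sub 1).const_mul (1 / ((k i : ℝ) + 1))
    have h5 := h4.comp_hasFDerivAt x (hnorm i)
    exact h5
  have hproj : ∀ j : (Σ i : Fin m, Fin (k i + 1)) ⊕ Fin (N - (∑ i, k i) - m),
      HasFDerivAt (𝕜 := ℝ)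
        (fun z : EuclideanSpace ℝ ((Σ i : Fin m, Fin (k i + 1)) ⊕ Fin (N - (∑ i, k i) - m)) => z j)
        (EuclideanSpace.proj j) x := fun j =>
    (EuclideanSpace.proj j : EuclideanSpace ℝ _ →L[ℝ] ℝ).hasFDerivAt
  have hcomp : ∀ j : (Σ i : Fin m, Fin (k i + 1)) ⊕ Fin (N - (∑ i, k i) - m),
      HasFDerivAt (fun z => chiField (d := N - (∑ i, k i) - m) τ z j)
      (Sum.elim
        (fun p : Σ i : Fin m, Fin (k i + 1) =>
          ((1 / ((k p.1 : ℝ) + 1)) * (1 - (τ p.1 / ‖blockOf x p.1‖) ^ (k p.1 + 1))) •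
              EuclideanSpace.proj (Sum.inl p) +
            (x (Sum.inl p)) •
              (((1 / ((k p.1 : ℝ) + 1)) *
                (-(((k p.1 + 1 : ℕ) : ℝ) * (τ p.1 / ‖blockOf x p.1‖) ^ (k p.1 + 1 - 1) *
                  ((0 * ‖blockOf x p.1‖ - τ p.1 * 1) / ‖blockOf x p.1‖ ^ 2)))) •
              ((‖blockOf x p.1‖⁻¹ • innerSL ℝ (blockOf x p.1)).comp (blockCLM p.1))))
        (fun j' => EuclideanSpace.proj (Sum.inr j')) j) x := by
    intro j
    rcases j with p | j'
    · simp only [chiField, Sum.elim_inl]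
      exact (hcoef p.1).mul (hproj (Sum.inl p))
    · simp only [chiField, Sum.elim_inr]
      exact hproj (Sum.inr j')
  have hG := hasFDerivAt_pi.2 hcomp
  have hχ := ((PiLp.continuousLinearEquiv 2 ℝ
      (fun _ : (Σ i : Fin m, Fin (k i + 1)) ⊕ Fin (N - (∑ i, k i) - m) =>
        ℝ)).symm.toContinuousLinearMap).hasFDerivAt.comp x hG
  have hfun : (⇑((PiLp.continuousLinearEquiv 2 ℝ
      (fun _ : (Σ i : Fin m, Fin (k i + 1)) ⊕ Fin (N - (∑ i, k i) - m) =>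
        ℝ)).symm.toContinuousLinearMap) ∘ fun z j => chiField (d := N - (∑ i, k i) - m) τ z j)
      = chiField (d := N - (∑ i, k i) - m) τ := rfl
  rw [hfun] at hχ
  refine ⟨hχ.differentiableAt, ?_⟩
  have diag : ∀ j : (Σ i : Fin m, Fin (k i + 1)) ⊕ Fin (N - (∑ i, k i) - m),
      fderiv ℝ (chiField (d := N - (∑ i, k i) - m) τ) x (EuclideanSpace.single j 1) j
      = (Sum.elim
        (fun p : Σ i : Fin m, Fin (k i + 1) =>
          ((1 / ((k p.1 : ℝ) + 1)) * (1 - (τ p.1 / ‖blockOf x p.1‖) ^ (k p.1 + 1))) •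
              EuclideanSpace.proj (Sum.inl p) +
            (x (Sum.inl p)) •
              (((1 / ((k p.1 : ℝ) + 1)) *
                (-(((k p.1 + 1 : ℕ) : ℝ) * (τ p.1 / ‖blockOf x p.1‖) ^ (k p.1 + 1 - 1) *
                  ((0 * ‖blockOf x p.1‖ - τ p.1 * 1) / ‖blockOf x p.1‖ ^ 2)))) •
              ((‖blockOf x p.1‖⁻¹ • innerSL ℝ (blockOf x p.1)).comp (blockCLM p.1))))
        (fun j' => EuclideanSpace.proj (Sum.inr j')) j) (EuclideanSpace.single j 1) := by
    intro j
    have h := (((EuclideanSpace.proj j : EuclideanSpace ℝ _ →L[ℝ] ℝ).hasFDerivAt.comp x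
      hχ).unique (hcomp j))
    rw [hχ.fderiv]
    exact congrFun (congrArg DFunLike.coe h) (EuclideanSpace.single j 1)
  rw [Finset.sum_congr rfl (fun j _ => diag j), Fintype.sum_sum_type,
    ← Finset.univ_sigma_univ, Finset.sum_sigma]
  simp only [Sum.elim_inl, Sum.elim_inr, ContinuousLinearMap.add_apply,
    ContinuousLinearMap.coe_smul', Pi.smul_apply, smul_eq_mul,
    ContinuousLinearMap.coe_comp', Function.comp_apply, innerSL_apply_apply,
    PiLp.proj_apply, EuclideanSpace.single_apply, if_pos rfl, blockCLM_single,
    EuclideanSpace.inner_single_right, conj_trivial, mul_one, one_mul, if_true, blockOf_apply, blockOf_single]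
  have hstep : ∀ i : Fin m,
      ∑ a : Fin (k i + 1),
        (1 / ((k i : ℝ) + 1) * (1 - (τ i / ‖blockOf x i‖) ^ (k i + 1)) +
          blockOf x i a *
            (1 / ((k i : ℝ) + 1) *
                -(((k i + 1 : ℕ) : ℝ) * (τ i / ‖blockOf x i‖) ^ (k i + 1 - 1) *
                    ((0 * ‖blockOf x i‖ - τ i) / ‖blockOf x i‖ ^ 2)) *
              (‖blockOf x i‖⁻¹ * blockOf x i a))) = 1 := by
    intro i
    have hrne : ‖blockOf x i‖ ≠ 0 := (hr i).ne'
    have hn : ((k i : ℝ) + 1) ≠ 0 := by positivity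
    have hyy : ∑ a, blockOf x i a * blockOf x i a = ‖blockOf x i‖ ^ 2 := by
      rw [← real_inner_self_eq_norm_sq]
      simp [PiLp.inner_apply, RCLike.inner_apply, conj_trivial]
      rw [EuclideanSpace.norm_eq, Real.sq_sqrt (by positivity)]
      exact Finset.sum_congr rfl fun a _ => by rw [Real.norm_eq_abs, sq_abs, sq]
    rw [Finset.sum_add_distrib, Finset.sum_const, Finset.card_univ, Fintype.card_fin]
    have h2 : ∑ a : Fin (k i + 1),
        blockOf x i a *
          (1 / ((k i : ℝ) + 1) *
              -(((k i + 1 : ℕ) : ℝ) * (τ i / ‖blockOf x i‖) ^ (k i + 1 - 1) *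
                  ((0 * ‖blockOf x i‖ - τ i) / ‖blockOf x i‖ ^ 2)) *
            (‖blockOf x i‖⁻¹ * blockOf x i a))
        = (1 / ((k i : ℝ) + 1) *
              -(((k i + 1 : ℕ) : ℝ) * (τ i / ‖blockOf x i‖) ^ (k i + 1 - 1) *
                  ((0 * ‖blockOf x i‖ - τ i) / ‖blockOf x i‖ ^ 2)) * ‖blockOf x i‖⁻¹) *
            ∑ a, blockOf x i a * blockOf x i a := by
      rw [Finset.mul_sum]
      exact Finset.sum_congr rfl fun a _ => by ring
    rw [h2, hyy]
    simp only [Nat.add_sub_cancel, Nat.cast_add, Nat.cast_one, nsmul_eq_mul, zero_mul, zero_sub,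
      div_pow]
    field_simp
    ring
  rw [Finset.sum_congr rfl (fun i _ => hstep i), Finset.sum_const, Finset.sum_const,
    Finset.card_univ, Finset.card_univ, Fintype.card_fin, Fintype.card_fin]
  have hcast : ((N - (∑ i, k i) - m : ℕ) : ℝ) = (N : ℝ) - (∑ i, (k i : ℝ)) - (m : ℝ) := by
    have h1 : (N - (∑ i, k i) - m) + ((∑ i, k i) + m) = N := by omega
    have h2 := congrArg (fun n : ℕ => (n : ℝ)) h1
    push_cast at h2
    linarith
  simp only [smul_eq_mul, mul_one, nsmul_eq_mul]
  rw [hcast]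
  ring
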